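/- arXiv:math/0502523 — 3 statements merged into one kernel-verified Lean document; each statement's English description precedes it below -/
import Mathlib

section
/- Let Φ be an irreducible root system with basis Δ, largest root α_M, extended basis Δ' = Δ ∪ {−α_M}, and Coxeter number h(Φ). Then every root α ∈ Φ can be written as a linear combination with nonnegative integer coefficients of elements of Δ', and there is a unique such combination in which the sum of the coefficients is strictly smaller than h(Φ). -/
open Finset

/-- A based, irreducible, reduced root system in a Euclidean space, together with
coordinate data with respect to the base `Δ`, the highest root, and the
extended base `Δ' = Δ ∪ {-highest}`. -/
structure BasedRootSystem (V : Type*) [NormedAddCommGroup V] [InnerProductSpace ℝ V] where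
  Φ : Finset V
  zero_not_mem : (0 : V) ∉ Φ
  neg_mem : ∀ α ∈ Φ, -α ∈ Φ
  reduced : ∀ α ∈ Φ, ∀ c : ℝ, c • α ∈ Φ → c = 1 ∨ c = -1
  crystallographic : ∀ α ∈ Φ, ∀ β ∈ Φ, ∃ n : ℤ,
    2 * (inner ℝ α β : ℝ) / (inner ℝ α α : ℝ) = (n : ℝ)
  reflect_mem : ∀ α ∈ Φ, ∀ β ∈ Φ, β - (2 * (inner ℝ β α : ℝ) / (inner ℝ α α : ℝ)) • α ∈ Φ
  Δ : Finset V
  base_sub : Δ ⊆ Φ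
  indep : LinearIndependent ℝ (fun γ : Δ => (γ : V))
  coord : V → V → ℤ
  coord_zero : ∀ γ : V, coord 0 γ = 0
  coord_spec : ∀ α ∈ Φ, α = ∑ γ ∈ Δ, (coord α γ : ℝ) • γ
  coord_sign : ∀ α ∈ Φ, (∀ γ ∈ Δ, 0 ≤ coord α γ) ∨ (∀ γ ∈ Δ, coord α γ ≤ 0)
  highest : V
  highest_mem : highest ∈ Φ
  highest_pos : ∀ γ ∈ Δ, 1 ≤ coord highest γ
  highest_is_highest : ∀ α ∈ Φ, ∀ γ ∈ Δ, coord α γ ≤ coord highest γ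

namespace BasedRootSystem

variable {V : Type*} [NormedAddCommGroup V] [InnerProductSpace ℝ V] (B : BasedRootSystem V)

/-- `α` is positive relative to the base `Δ`. -/
def IsPos (α : V) : Prop := ∀ γ ∈ B.Δ, 0 ≤ B.coord α γ

/-- `ε_α` : `0` if `α` is positive, `1` otherwise. -/
noncomputable def eps (α : V) : ℤ := by
  classical exact if B.IsPos α then 0 else 1

/-- The extended base `Δ' = Δ ∪ {-α_M}`. -/
noncomputable def extBase : Finset V := by
  classical exact insert (-B.highest) B.Δ

/-- The Coxeter number: one plus the height of the highest root. -/
def cox : ℤ := (∑ γ ∈ B.Δ, B.coord B.highest γ) + 1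

/-- Coefficientwise order on affine roots `(α, n)`, via their decomposition in the
affine basis `Δ_aff`. -/
def affLe (p q : V × ℤ) : Prop :=
  p.2 ≤ q.2 ∧ ∀ γ ∈ B.Δ,
    B.coord p.1 γ + p.2 * B.coord B.highest γ ≤ B.coord q.1 γ + q.2 * B.coord B.highest γ

/-- The partial order on `Φ` induced from the affine root system:
`α ≤ β` iff `(α, v + ε_α) ≤ (β, v + ε_β)` coefficientwise for every `v`. -/
def rle (α β : V) : Prop := B.affLe (α, B.eps α) (β, B.eps β)

/-- `c` is a decomposition of `α` as a nonnegative integral combination of the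
extended base `Δ'`. -/
def IsDecomp (α : V) (c : V → ℕ) : Prop :=
  α = ∑ γ ∈ B.extBase, (c γ : ℝ) • γ

/-- The sum of the coefficients of a decomposition in `Δ'`. -/
noncomputable def decompSum (c : V → ℕ) : ℤ := ∑ γ ∈ B.extBase, (c γ : ℤ)

/-- A subset of `Φ` is `Δ'`-complete if it is downward closed for the order `rle`. -/
def Complete (Ψ : Set V) : Prop :=
  ∀ α ∈ Ψ, ∀ β ∈ B.Φ, B.rle β α → β ∈ Ψ

/-- The set of ratios `(Σ ε_{α_i})/t` over nonempty zero-sum families in `X`. -/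
noncomputable def ratioSet (X : Set V) : Set ℝ :=
  {q | ∃ (t : ℕ) (a : Fin t → V), 0 < t ∧ (∀ i, a i ∈ X) ∧ (∑ i, a i) = 0 ∧
        q = (∑ i, (B.eps (a i) : ℝ)) / (t : ℝ)}

/-- Linear independence of the base, restated for sums over the Finset `Δ`. -/
lemma coords_zero {f : V → ℝ} (h : ∑ γ ∈ B.Δ, f γ • γ = 0) : ∀ γ ∈ B.Δ, f γ = 0 := by
  have h' : ∑ γ : B.Δ, f (γ : V) • (γ : V) = 0 := by
    rwa [Finset.sum_coe_sort B.Δ (fun γ => f γ • γ)]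
  intro γ hγ
  exact Fintype.linearIndependent_iff.mp B.indep (fun γ => f (γ : V)) h' ⟨γ, hγ⟩

/-- Uniqueness of coordinates. -/
lemma coord_unique {α : V} (hα : α ∈ B.Φ) {f : V → ℝ}
    (hf : α = ∑ γ ∈ B.Δ, f γ • γ) : ∀ γ ∈ B.Δ, f γ = (B.coord α γ : ℝ) := by
  intro γ hγ
  have h0 : ∑ γ ∈ B.Δ, (f γ - (B.coord α γ : ℝ)) • γ = 0 := by
    simp only [sub_smul, Finset.sum_sub_distrib]
    rw [← hf, ← B.coord_spec α hα, sub_self]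
  have := B.coords_zero h0 γ hγ
  linarith

lemma coord_neg {α : V} (hα : α ∈ B.Φ) :
    ∀ γ ∈ B.Δ, B.coord (-α) γ = - B.coord α γ := by
  intro γ hγ
  have h : -α = ∑ γ ∈ B.Δ, (-(B.coord α γ : ℝ)) • γ := by
    simp only [neg_smul, Finset.sum_neg_distrib]
    rw [← B.coord_spec α hα]
  have := B.coord_unique (B.neg_mem α hα) h γ hγ
  exact_mod_cast this.symm

lemma coord_self {δ : V} (hδ : δ ∈ B.Δ) : B.coord δ δ = 1 := by
  classical
  have h : δ = ∑ γ ∈ B.Δ, (if γ = δ then (1 : ℝ) else 0) • γ := by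
    simp only [ite_smul, one_smul, zero_smul]
    rw [Finset.sum_ite_eq' B.Δ δ (fun γ => γ)]
    simp [hδ]
  have := B.coord_unique (B.base_sub hδ) h δ hδ
  simp at this
  exact_mod_cast this.symm

lemma neg_highest_not_mem : -B.highest ∉ B.Δ := by
  intro h
  have h1 := B.coord_self h
  have h2 := B.coord_neg B.highest_mem (-B.highest) h
  have h3 := B.highest_pos _ h
  omega

lemma cox_pos : 0 < B.cox := by
  have : 0 ≤ ∑ γ ∈ B.Δ, B.coord B.highest γ :=
    Finset.sum_nonneg fun γ hγ => le_trans zero_le_one (B.highest_pos γ hγ)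
  unfold cox; omega

/-- The coefficients of a decomposition in `Δ'` are determined by the coefficient
at `-α_M`. -/
lemma decomp_coord {α : V} (hα : α ∈ B.Φ) {c : V → ℕ} (hc : B.IsDecomp α c) :
    ∀ γ ∈ B.Δ, (c γ : ℤ) = B.coord α γ + (c (-B.highest) : ℤ) * B.coord B.highest γ := by
  classical
  have hc' : α = (c (-B.highest) : ℝ) • (-B.highest) + ∑ γ ∈ B.Δ, (c γ : ℝ) • γ := by
    rw [hc]; unfold extBase
    rw [Finset.sum_insert B.neg_highest_not_mem]
  intro γ hγ
  have h0 : ∑ γ ∈ B.Δ, (((c γ : ℝ)) - ((B.coord α γ : ℝ) + (c (-B.highest) : ℝ) * (B.coord B.highest γ : ℝ))) • γ = 0 := by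
    simp only [sub_smul, add_smul, mul_smul, Finset.sum_sub_distrib, Finset.sum_add_distrib,
      ← Finset.smul_sum]
    rw [← B.coord_spec α hα, ← B.coord_spec B.highest B.highest_mem]
    have : ∑ γ ∈ B.Δ, (c γ : ℝ) • γ = α + (c (-B.highest) : ℝ) • B.highest := by
      rw [hc']; rw [smul_neg]; abel
    rw [this]; abel
  have := B.coords_zero h0 γ hγ
  have h2 : (c γ : ℝ) = (B.coord α γ : ℝ) + (c (-B.highest) : ℝ) * (B.coord B.highest γ : ℝ) := by
    linarith
  exact_mod_cast h2

lemma decompSum_eq {α : V} (hα : α ∈ B.Φ) {c : V → ℕ} (hc : B.IsDecomp α c) :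
    B.decompSum c = (c (-B.highest) : ℤ) * B.cox + ∑ γ ∈ B.Δ, B.coord α γ := by
  classical
  unfold decompSum extBase
  rw [Finset.sum_insert B.neg_highest_not_mem]
  rw [Finset.sum_congr rfl (B.decomp_coord hα hc)]
  rw [Finset.sum_add_distrib, ← Finset.mul_sum]
  unfold cox; ring

end BasedRootSystem

/-- every root is a nonnegative integral combination of the extended
base `Δ'`, and there is a unique such combination whose coefficient sum is
strictly smaller than the Coxeter number. -/
theorem stmt0 {V : Type*} [NormedAddCommGroup V] [InnerProductSpace ℝ V]
    (B : BasedRootSystem V) :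
    ∀ α ∈ B.Φ,
      (∃ c : V → ℕ, B.IsDecomp α c ∧ B.decompSum c < B.cox) ∧
      ∀ c₁ c₂ : V → ℕ, B.IsDecomp α c₁ → B.decompSum c₁ < B.cox →
        B.IsDecomp α c₂ → B.decompSum c₂ < B.cox →
        ∀ γ ∈ B.extBase, c₁ γ = c₂ γ := by
  classical
  intro α hα
  have hcox := B.cox_pos
  constructor
  · -- existence
    rcases B.coord_sign α hα with hpos | hneg
    · -- α positive : coefficients of α in Δ, 0 at -highest
      set c : V → ℕ := fun γ => if γ = -B.highest then 0 else (B.coord α γ).toNat with hc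
      have hc0 : c (-B.highest) = 0 := by rw [hc]; simp
      have hd : B.IsDecomp α c := by
        unfold BasedRootSystem.IsDecomp BasedRootSystem.extBase
        rw [Finset.sum_insert B.neg_highest_not_mem]
        have hrw : ∀ γ ∈ B.Δ, ((c γ : ℝ)) • γ = ((B.coord α γ : ℝ)) • γ := by
          intro γ hγ
          have hne : γ ≠ -B.highest := fun h => B.neg_highest_not_mem (h ▸ hγ)
          rw [hc]
          simp only [if_neg hne]
          congr 1
          exact_mod_cast Int.toNat_of_nonneg (hpos γ hγ)
        rw [Finset.sum_congr rfl hrw, ← B.coord_spec α hα, hc0]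
        simp
      refine ⟨c, hd, ?_⟩
      rw [B.decompSum_eq hα hd]
      have hc0 : c (-B.highest) = 0 := by rw [hc]; simp
      rw [hc0]
      have hle : ∑ γ ∈ B.Δ, B.coord α γ ≤ ∑ γ ∈ B.Δ, B.coord B.highest γ :=
        Finset.sum_le_sum fun γ hγ => B.highest_is_highest α hα γ hγ
      unfold BasedRootSystem.cox
      push_cast
      linarith
    · -- α negative : coefficients of α + highest in Δ, 1 at -highest
      have key : ∀ γ ∈ B.Δ, 0 ≤ B.coord α γ + B.coord B.highest γ := by
        intro γ hγ
        have h1 := B.highest_is_highest (-α) (B.neg_mem α hα) γ hγ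
        have h2 := B.coord_neg hα γ hγ
        omega
      set c : V → ℕ := fun γ => if γ = -B.highest then 1
        else (B.coord α γ + B.coord B.highest γ).toNat with hc
      have hc1 : c (-B.highest) = 1 := by rw [hc]; simp
      have hd : B.IsDecomp α c := by
        unfold BasedRootSystem.IsDecomp BasedRootSystem.extBase
        rw [Finset.sum_insert B.neg_highest_not_mem]
        have hrw : ∀ γ ∈ B.Δ, ((c γ : ℝ)) • γ =
            ((B.coord α γ : ℝ) + (B.coord B.highest γ : ℝ)) • γ := by
          intro γ hγ
          have hne : γ ≠ -B.highest := fun h => B.neg_highest_not_mem (h ▸ hγ)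
          rw [hc]
          simp only [if_neg hne]
          congr 1
          exact_mod_cast Int.toNat_of_nonneg (key γ hγ)
        rw [Finset.sum_congr rfl hrw]
        simp only [add_smul, Finset.sum_add_distrib]
        rw [← B.coord_spec α hα, ← B.coord_spec B.highest B.highest_mem, hc1]
        push_cast
        simp only [one_smul]
        abel
      refine ⟨c, hd, ?_⟩
      rw [B.decompSum_eq hα hd]
      rw [hc1]
      have hne : ∃ γ ∈ B.Δ, B.coord α γ ≠ 0 := by
        by_contra hall
        push_neg at hall
        have h0 : α = 0 := by
          rw [B.coord_spec α hα]
          apply Finset.sum_eq_zero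
          intro γ hγ
          rw [hall γ hγ]; simp
        exact B.zero_not_mem (h0 ▸ hα)
      obtain ⟨γ₀, hγ₀, hne0⟩ := hne
      have hlt : ∑ γ ∈ B.Δ, B.coord α γ < ∑ γ ∈ B.Δ, (0 : ℤ) :=
        Finset.sum_lt_sum (fun γ hγ => hneg γ hγ)
          ⟨γ₀, hγ₀, lt_of_le_of_ne (hneg γ₀ hγ₀) hne0⟩
      rw [Finset.sum_const_zero] at hlt
      push_cast
      linarith
  · -- uniqueness
    intro c₁ c₂ h1 hs1 h2 hs2
    have e1 := B.decompSum_eq hα h1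
    have e2 := B.decompSum_eq hα h2
    have hnn1 : 0 ≤ B.decompSum c₁ :=
      Finset.sum_nonneg fun γ _ => Int.ofNat_nonneg _
    have hnn2 : 0 ≤ B.decompSum c₂ :=
      Finset.sum_nonneg fun γ _ => Int.ofNat_nonneg _
    set S := ∑ γ ∈ B.Δ, B.coord α γ with hS
    have key : ∀ m₁ m₂ : ℤ, m₁ * B.cox + S < B.cox → 0 ≤ m₂ * B.cox + S → m₁ ≤ m₂ := by
      intro m₁ m₂ ha hb
      have h3 : m₁ * B.cox < (m₂ + 1) * B.cox := by
        have : (m₂ + 1) * B.cox = m₂ * B.cox + B.cox := by ring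
        linarith
      have := lt_of_mul_lt_mul_right h3 (le_of_lt hcox)
      omega
    have hm1 : (c₁ (-B.highest) : ℤ) ≤ (c₂ (-B.highest) : ℤ) :=
      key _ _ (e1 ▸ hs1) (e2 ▸ hnn2)
    have hm2 : (c₂ (-B.highest) : ℤ) ≤ (c₁ (-B.highest) : ℤ) :=
      key _ _ (e2 ▸ hs2) (e1 ▸ hnn1)
    have hm : (c₁ (-B.highest) : ℤ) = (c₂ (-B.highest) : ℤ) := le_antisymm hm1 hm2
    intro γ hγ
    rcases Finset.mem_insert.mp hγ with h | h
    · subst h; exact_mod_cast hm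
    · have d1 := B.decomp_coord hα h1 γ h
      have d2 := B.decomp_coord hα h2 γ h
      rw [hm] at d1
      exact_mod_cast d1.trans d2.symm
end

section
/- Let F be a complete discretely valued field of residue characteristic 2 that is absolutely unramified (i.e., 2 is a uniformizer), with perfect residue field, and let O be its ring of integers. Then O is generated as a ring by the squares it contains. In particular, every element z of 1 + 𝔭 (𝔭 the maximal ideal) satisfies z = ((z+1)/2)² − ((z−1)/2)², with both (z+1)/2 and (z−1)/2 in O. -/
/-- let `O` be the ring of integers of a complete discretely valued
field of residue characteristic 2 which is absolutely unramified (i.e. `2` is a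
uniformizer), with perfect residue field. Then `O` is generated as a ring by its
squares; in particular every `z ∈ 1 + 𝔭` satisfies
`z = ((z+1)/2)^2 - ((z-1)/2)^2` with `(z±1)/2 ∈ O`. -/
theorem stmt8 (O : Type*) [CommRing O] [IsDomain O] [IsDiscreteValuationRing O]
    [IsAdicComplete (IsLocalRing.maximalIdeal O) O]
    [CharP (IsLocalRing.ResidueField O) 2]
    [PerfectRing (IsLocalRing.ResidueField O) 2]
    (hunif : Irreducible (2 : O)) :
    Subring.closure {x : O | ∃ y : O, x = y ^ 2} = ⊤ ∧
    ∀ z : O, z - 1 ∈ IsLocalRing.maximalIdeal O →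
      ∃ a b : O, 2 * a = z + 1 ∧ 2 * b = z - 1 ∧ z = a ^ 2 - b ^ 2 := by
  have hmax : IsLocalRing.maximalIdeal O = Ideal.span {2} :=
    (IsDiscreteValuationRing.irreducible_iff_uniformizer (2 : O)).mp hunif
  -- every unit is a difference of squares
  have hunit : ∀ x : O, IsUnit x → ∃ a b : O, x = a ^ 2 - b ^ 2 := by
    intro x hx
    obtain ⟨s, hs⟩ := surjective_frobenius (IsLocalRing.ResidueField O) 2
      (IsLocalRing.residue O x)
    obtain ⟨c, hc⟩ := IsLocalRing.residue_surjective (R := O) s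
    have hc2 : IsLocalRing.residue O (c ^ 2) = IsLocalRing.residue O x := by
      rw [map_pow, hc, ← hs, frobenius_def]
    have hmem : x - c ^ 2 ∈ IsLocalRing.maximalIdeal O := by
      have : IsLocalRing.residue O (x - c ^ 2) = 0 := by
        rw [map_sub, hc2, sub_self]
      exact (Ideal.Quotient.eq_zero_iff_mem).mp this
    rw [hmax, Ideal.mem_span_singleton] at hmem
    obtain ⟨d, hd⟩ := hmem
    have hcunit : IsUnit c := by
      by_contra hcn
      have : IsLocalRing.residue O c = 0 :=
        Ideal.Quotient.eq_zero_iff_mem.mpr ((IsLocalRing.mem_maximalIdeal c).mpr hcn)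
      have hx0 : IsLocalRing.residue O x = 0 := by
        rw [← hc2, map_pow, this]; ring
      exact (mem_nonunits_iff.mp ((IsLocalRing.mem_maximalIdeal x).mp
        (Ideal.Quotient.eq_zero_iff_mem.mp hx0))) hx
    obtain ⟨u, hu⟩ := hcunit
    refine ⟨c + d * ↑u⁻¹, d * ↑u⁻¹, ?_⟩
    have huu : (↑u⁻¹ : O) * c = 1 := by rw [← hu]; exact u.inv_mul
    have : (c + d * ↑u⁻¹) ^ 2 - (d * ↑u⁻¹) ^ 2 = c ^ 2 + 2 * (d * (↑u⁻¹ * c)) := by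
      ring
    rw [this, huu, mul_one]
    linear_combination hd
  constructor
  · rw [eq_top_iff]
    intro x _
    have hsq : ∀ y : O, y ^ 2 ∈ Subring.closure {x : O | ∃ y : O, x = y ^ 2} :=
      fun y => Subring.subset_closure ⟨y, rfl⟩
    by_cases hx : IsUnit x
    · obtain ⟨a, b, hab⟩ := hunit x hx
      rw [hab]; exact sub_mem (hsq a) (hsq b)
    · have h1 : IsUnit (x + 1) := by
        have hmem : -x ∈ nonunits O := by
          rw [mem_nonunits_iff]; intro h; exact hx (by simpa using h.neg)
        have := IsLocalRing.isUnit_one_sub_self_of_mem_nonunits (-x) hmem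
        simpa [sub_neg_eq_add, add_comm] using this
      obtain ⟨a, b, hab⟩ := hunit _ h1
      have hx' : x = a ^ 2 - b ^ 2 - 1 ^ 2 := by rw [← hab]; ring
      rw [hx']
      exact sub_mem (sub_mem (hsq a) (hsq b)) (hsq 1)
  · intro z hz
    rw [hmax, Ideal.mem_span_singleton] at hz
    obtain ⟨b, hb⟩ := hz
    exact ⟨b + 1, b, by linear_combination -hb, hb.symm, by linear_combination hb⟩
end

section
/- Let Φ be a root system, and for α ∈ Φ and positive integers v ≤ c define the function f_{α,c,v} : Φ → ℤ by f_{α,c,v}(α) = v, f_{α,c,v}(2α) = v if 2α ∈ Φ, and f_{α,c,v}(β) = c for all other β ∈ Φ. Then f_{α,c,v} is a concave function, i.e., f_{α,c,v}(β+γ) ≤ f_{α,c,v}(β) + f_{α,c,v}(γ) whenever β, γ, β+γ ∈ Φ, and f_{α,c,v}(β) + f_{α,c,v}(−β) ≥ 0 for all β ∈ Φ. -/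
open Finset

/-- A (possibly non-reduced) root system in a Euclidean space. -/
structure RootSystemE (V : Type*) [NormedAddCommGroup V] [InnerProductSpace ℝ V] where
  Φ : Finset V
  zero_not_mem : (0 : V) ∉ Φ
  neg_mem : ∀ α ∈ Φ, -α ∈ Φ
  crystallographic : ∀ α ∈ Φ, ∀ β ∈ Φ, ∃ n : ℤ,
    2 * (inner ℝ α β : ℝ) / (inner ℝ α α : ℝ) = (n : ℝ)
  reflect_mem : ∀ α ∈ Φ, ∀ β ∈ Φ, β - (2 * (inner ℝ β α : ℝ) / (inner ℝ α α : ℝ)) • α ∈ Φ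

open scoped Classical in
/-- the function `f_{α,c,v}` with `f(α) = v`, `f(2α) = v` (when `2α`
is a root) and `f(β) = c` for all other roots is a concave function. -/
theorem stmt9 {V : Type*} [NormedAddCommGroup V] [InnerProductSpace ℝ V]
    (R : RootSystemE V) (α : V) (hα : α ∈ R.Φ)
    (v c : ℤ) (hv : 0 < v) (hvc : v ≤ c)
    (f : V → ℤ) (hf : ∀ β : V, f β = if β = α ∨ β = α + α then v else c) :
    (∀ β ∈ R.Φ, ∀ γ ∈ R.Φ, β + γ ∈ R.Φ → f (β + γ) ≤ f β + f γ) ∧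
    (∀ β ∈ R.Φ, 0 ≤ f β + f (-β)) := by
  classical
  have hαne : α ≠ 0 := fun h => R.zero_not_mem (h ▸ hα)
  have ha : (inner ℝ α α : ℝ) ≠ 0 := fun h => hαne (inner_self_eq_zero.mp h)
  have h3 : α + α + α ∉ R.Φ := by
    intro hmem
    obtain ⟨n, hn⟩ := R.crystallographic _ hmem _ hα
    have h1 : (inner ℝ (α+α+α) α : ℝ) = 3 * inner ℝ α α := by
      simp [inner_add_left]; ring
    have h2 : (inner ℝ (α+α+α) (α+α+α) : ℝ) = 9 * inner ℝ α α := by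
      simp only [inner_add_left, inner_add_right]; ring
    rw [h1, h2] at hn; field_simp at hn
    have h5 : (6:ℝ) * inner ℝ α α = (9*(n:ℝ)) * inner ℝ α α := by linear_combination (inner ℝ α α) * hn
    have h6 : (6:ℤ) = 9 * n := by exact_mod_cast mul_right_cancel₀ ha h5
    omega
  have h4 : (α + α) + (α + α) ∉ R.Φ := by
    intro hmem
    obtain ⟨n, hn⟩ := R.crystallographic _ hmem _ hα
    have h1 : (inner ℝ ((α+α)+(α+α)) α : ℝ) = 4 * inner ℝ α α := by
      simp [inner_add_left]; ring
    have h2 : (inner ℝ ((α+α)+(α+α)) ((α+α)+(α+α)) : ℝ) = 16 * inner ℝ α α := by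
      simp only [inner_add_left, inner_add_right]; ring
    rw [h1, h2] at hn; field_simp at hn
    have h5 : (8:ℝ) * inner ℝ α α = (16*(n:ℝ)) * inner ℝ α α := by linear_combination (inner ℝ α α) * hn
    have h6 : (8:ℤ) = 16 * n := by exact_mod_cast mul_right_cancel₀ ha h5
    omega
  constructor
  · intro β hβ γ hγ hβγ
    rw [hf β, hf γ, hf (β+γ)]
    by_cases hb : β = α ∨ β = α + α
    · by_cases hg : γ = α ∨ γ = α + α
      · rcases hb with rfl|rfl <;> rcases hg with rfl|rfl
        · rw [if_pos (Or.inr rfl)]; omega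
        · rw [← add_assoc] at hβγ; exact absurd hβγ h3
        · exact absurd hβγ h3
        · exact absurd hβγ h4
      · rw [if_pos hb, if_neg hg]; split <;> omega
    · rw [if_neg hb]; split <;> omega
  · intro β hβ
    rw [hf β, hf (-β)]
    split <;> split <;> omega
end
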